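/- Let (J,B) be a reduced 2-step nilpotent pseudo-Euclidean Jordan algebra over ℂ. Then Ann(J) = J², where J² = span{xy : x,y ∈ J}, and dim(J²) = (1/2)·dim(J). -/

import Mathlib

open LinearMap.BilinForm in
/-- In a reduced 2-step nilpotent pseudo-Euclidean Jordan algebra (J,B),
the annulator equals J² and dim(J²) = (1/2)·dim(J). -/
theorem stmt7
    {J : Type*} [AddCommGroup J] [Module ℂ J] [FiniteDimensional ℂ J] [Nontrivial J]
    (mul : J →ₗ[ℂ] J →ₗ[ℂ] J)
    (hcomm : ∀ x y : J, mul x y = mul y x)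
    (h2step : ∀ x y z : J, mul (mul x y) z = 0)
    (B : J →ₗ[ℂ] J →ₗ[ℂ] ℂ)
    (hBsymm : ∀ x y : J, B x y = B y x)
    (hBnondeg : ∀ x : J, (∀ y : J, B x y = 0) → x = 0)
    (hBassoc : ∀ x y z : J, B (mul x y) z = B x (mul y z))
    (hred : ∀ x : J, (∀ y : J, mul x y = 0) →
      ∀ x' : J, (∀ y : J, mul x' y = 0) → B x x' = 0) :
    ({x : J | ∀ y : J, mul x y = 0}
        = (Submodule.span ℂ {a : J | ∃ x y : J, mul x y = a} : Set J)) ∧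
    2 * Module.finrank ℂ (Submodule.span ℂ {a : J | ∃ x y : J, mul x y = a})
        = Module.finrank ℂ J := by
  set B' : LinearMap.BilinForm ℂ J := B with hB'
  have hrefl : B'.IsRefl := fun x y h => by rw [hB', hBsymm]; exact h
  have hnd : B'.Nondegenerate :=
    (LinearMap.IsRefl.nondegenerate_iff_separatingLeft hrefl).mpr fun x hx => hBnondeg x hx
  set W : Submodule ℂ J := Submodule.span ℂ {a : J | ∃ x y : J, mul x y = a} with hW
  -- Ann = orthogonal W (as sets)
  have hAnn : {x : J | ∀ y : J, mul x y = 0} = (B'.orthogonal W : Set J) := by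
    ext x
    simp only [Set.mem_setOf_eq, SetLike.mem_coe, LinearMap.BilinForm.mem_orthogonal_iff]
    constructor
    · intro hx n hn
      refine Submodule.span_induction ?_ ?_ ?_ ?_ hn
      · rintro a ⟨y, z, rfl⟩
        show B (mul y z) x = 0
        rw [hBassoc, hcomm z x, hx z]
        simp
      · simp [LinearMap.BilinForm.IsOrtho]
      · intro a b _ _ ha hb
        simp [ha, hb]
      · intro c a _ ha
        simp [ha]
    · intro hx y
      apply hBnondeg
      intro z
      rw [hBassoc, hBsymm]
      exact hx (mul y z) (Submodule.subset_span ⟨y, z, rfl⟩)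
  -- W ≤ orthogonal W
  have hWle : W ≤ B'.orthogonal W := by
    rw [hW, Submodule.span_le]
    rintro a ⟨x, y, rfl⟩
    have : (mul x y : J) ∈ {x : J | ∀ y : J, mul x y = 0} := fun z => h2step x y z
    rw [hAnn] at this
    exact this
  -- orthogonal W ≤ W via reducedness and double orthogonal
  have hle : B'.orthogonal W ≤ W := by
    intro x hx
    have hxAnn : ∀ y : J, mul x y = 0 := by
      have : x ∈ {x : J | ∀ y : J, mul x y = 0} := by rw [hAnn]; exact hx
      exact this
    rw [← LinearMap.BilinForm.orthogonal_orthogonal hnd hrefl W]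
    intro n hn
    have hnAnn : ∀ y : J, mul n y = 0 := by
      have : n ∈ {x : J | ∀ y : J, mul x y = 0} := by rw [hAnn]; exact hn
      exact this
    exact hred n hnAnn x hxAnn
  have heq : B'.orthogonal W = W := le_antisymm hle hWle
  constructor
  · rw [hAnn, heq]
  · have hdim := LinearMap.BilinForm.finrank_orthogonal hnd W
    rw [heq] at hdim
    have hle' : Module.finrank ℂ W ≤ Module.finrank ℂ J := Submodule.finrank_le W
    omega
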